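/- Suppose the block matrix R = [[2·P̄₊^{−1} − P̄₊^{−1}·P₊·P̄₊^{−1}, 0, K],[0, P₋, P̄₋·K̄],[K*, K̄*·P̄₋, μΓ − I + K̄*·P̄₋·K + K*·P̄₋·K̄]] is positive semidefinite, where P₊, P₋, P̄₊, P̄₋ are Hermitian with P₊ ⪰ I, P₋ ⪰ I, P̄₊ ≻ 0, P̄₋ ≻ 0, K, K̄ are matrices of compatible size, Γ is Hermitian and μ > 0. Then μΓ − I − K*·(P₊ − P₋)·K is positive semidefinite. -/

import Mathlib

open Matrix
open scoped ComplexOrder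

/-- Iterative convex overbounding step: if the block matrix
`R = [[2P̄₊⁻¹ − P̄₊⁻¹P₊P̄₊⁻¹, 0, K], [0, P₋, P̄₋K̄], [K*, K̄*P̄₋, μΓ − I + K̄*P̄₋K + K*P̄₋K̄]]`
is positive semidefinite (with `P₊ ⪰ I`, `P₋ ⪰ I`, `P̄₊ ≻ 0`, `P̄₋ ≻ 0`, `Γ` Hermitian,
`μ > 0`), then `μΓ − I − K*(P₊ − P₋)K` is positive semidefinite. -/
theorem stmt_19 (n c : ℕ) (Pp Pm Pbp Pbm : Matrix (Fin n) (Fin n) ℂ)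
    (hPp : (Pp - 1).PosSemidef) (hPm : (Pm - 1).PosSemidef)
    (hPbp : Pbp.PosDef) (hPbm : Pbm.PosDef)
    (K Kb : Matrix (Fin n) (Fin c) ℂ)
    (Γ : Matrix (Fin c) (Fin c) ℂ) (hΓ : Γ.IsHermitian) (μ : ℝ) (hμ : 0 < μ)
    (hR : (Matrix.fromBlocks
        ((2 : ℝ) • Pbp⁻¹ - Pbp⁻¹ * Pp * Pbp⁻¹)
        (Matrix.fromCols 0 K)
        (Matrix.fromRows 0 Kᴴ)
        (Matrix.fromBlocks Pm (Pbm * Kb) (Kbᴴ * Pbm)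
          (μ • Γ - 1 + Kbᴴ * Pbm * K + Kᴴ * Pbm * Kb))).PosSemidef) :
    (μ • Γ - 1 - Kᴴ * (Pp - Pm) * K).PosSemidef := by
  -- Pm is positive definite, hence invertible
  have hPmPD : Pm.PosDef := by
    have h := Matrix.PosDef.posSemidef_add hPm Matrix.PosDef.one
    simpa using h
  haveI := hPmPD.isUnit.invertible
  haveI := hPbp.isUnit.invertible
  have hPmInv : Pm * Pm⁻¹ = 1 := Matrix.mul_inv_of_invertible Pm
  have hInvPm : Pm⁻¹ * Pm = 1 := Matrix.inv_mul_of_invertible Pm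
  have hPbpInv : Pbp * Pbp⁻¹ = 1 := Matrix.mul_inv_of_invertible Pbp
  have hInvPbp : Pbp⁻¹ * Pbp = 1 := Matrix.inv_mul_of_invertible Pbp
  have hPbpH : Pbpᴴ = Pbp := hPbp.isHermitian.eq
  have hPbmH : Pbmᴴ = Pbm := hPbm.isHermitian.eq
  have hPmH : Pmᴴ = Pm := hPmPD.isHermitian.eq
  have hPmInvH : (Pm⁻¹)ᴴ = Pm⁻¹ := hPmPD.isHermitian.inv.eq
  -- abbreviations
  set R := (Matrix.fromBlocks
        ((2 : ℝ) • Pbp⁻¹ - Pbp⁻¹ * Pp * Pbp⁻¹)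
        (Matrix.fromCols 0 K)
        (Matrix.fromRows 0 Kᴴ)
        (Matrix.fromBlocks Pm (Pbm * Kb) (Kbᴴ * Pbm)
          (μ • Γ - 1 + Kbᴴ * Pbm * K + Kᴴ * Pbm * Kb))) with hRdef
  set U : Matrix (Fin n) (Fin c) ℂ := Pbp * K with hU
  set W : Matrix (Fin n) (Fin c) ℂ := Pm⁻¹ * (Pbm * Kb) with hW
  set L : Matrix (Fin n) (Fin c) ℂ := K - W with hL
  set C : Matrix ((Fin n) ⊕ ((Fin n) ⊕ (Fin c))) (Fin c) ℂ :=
    Matrix.fromRows (-U) (Matrix.fromRows (-W) 1) with hC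
  -- the key algebraic identity
  have cb1 : ∀ X : Matrix (Fin n) (Fin c) ℂ, Pbp⁻¹ * (Pbp * X) = X := fun X => by
    rw [← Matrix.mul_assoc, hInvPbp, Matrix.one_mul]
  have cb2 : ∀ X : Matrix (Fin n) (Fin c) ℂ, Pbp * (Pbp⁻¹ * X) = X := fun X => by
    rw [← Matrix.mul_assoc, hPbpInv, Matrix.one_mul]
  have cm1 : ∀ X : Matrix (Fin n) (Fin c) ℂ, Pm⁻¹ * (Pm * X) = X := fun X => by
    rw [← Matrix.mul_assoc, hInvPm, Matrix.one_mul]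
  have cm2 : ∀ X : Matrix (Fin n) (Fin c) ℂ, Pm * (Pm⁻¹ * X) = X := fun X => by
    rw [← Matrix.mul_assoc, hPmInv, Matrix.one_mul]
  have key : μ • Γ - 1 - Kᴴ * (Pp - Pm) * K = Cᴴ * R * C + Lᴴ * Pm * L := by
    rw [hC, hL, hU, hW, hRdef]
    simp only [Matrix.conjTranspose_fromRows_eq_fromCols_conjTranspose,
      Matrix.conjTranspose_neg, Matrix.conjTranspose_one, Matrix.conjTranspose_mul,
      Matrix.conjTranspose_sub, Matrix.conjTranspose_add,
      hPbpH, hPbmH, hPmH, hPmInvH,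
      Matrix.fromCols_mul_fromBlocks, Matrix.fromCols_mul_fromRows,
      Matrix.sub_mul, Matrix.mul_sub, Matrix.add_mul, Matrix.mul_add,
      Matrix.neg_mul, Matrix.mul_neg, Matrix.smul_mul, Matrix.mul_smul,
      Matrix.mul_one, Matrix.one_mul, Matrix.zero_mul, Matrix.mul_zero,
      Matrix.mul_assoc, neg_neg, add_zero, zero_add, neg_zero, sub_zero, zero_sub,
      cb1, cb2, cm1, cm2, two_smul]
    abel
  rw [key]
  exact (hR.conjTranspose_mul_mul_same C).add
    ((hPmPD.posSemidef).conjTranspose_mul_mul_same L)
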